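/- Lemma (splitting inequality): Assume f and g are injective and the splitting condition holds. Then there exist N ∈ ℕ and ξ₀,…,ξ_{N-1} ∈ ℕ₀ such that the cylinder W := [ξ₀,…,ξ_{N-1}] satisfies ℙ⁻(W) > 0 and, for every n ≥ 1 and every x ∈ I, ℙ⁻(S_{nN}ˣ) ≤ ℙ⁻(Σ_n^W). -/
import Mathlib


open MeasureTheory Filter Topology Set
open scoped BigOperators

noncomputable section

/-- Tail sum ∑_{j ≥ i} p_j. -/
def tailSum (p : ℕ → ℝ) (i : ℕ) : ℝ := ∑' j : ℕ, p (i + j)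

/-- Invariant distribution m_i = (∑_{j≥i} p_j)/(1+E). -/
def mdist (p : ℕ → ℝ) (E : ℝ) (i : ℕ) : ℝ := tailSum p i / (1 + E)

/-- Transition matrix entries: p_{0j} = p_j, p_{(k+1)k} = 1, else 0. -/
def Ptrans (p : ℕ → ℝ) (i j : ℕ) : ℝ := if i = 0 then p j else if i = j + 1 then 1 else 0

/-- Reversed transition matrix q_{ij} = (m_j / m_i) · p_{ji}. -/
def qtrans (p : ℕ → ℝ) (E : ℝ) (i j : ℕ) : ℝ := mdist p E j / mdist p E i * Ptrans p j i

/-- Cylinder set of length n determined by the first n values of ξ. -/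
def cyl (ξ : ℕ → ℕ) (n : ℕ) : Set (ℕ → ℕ) := {ω | ∀ i < n, ω i = ξ i}

/-- Probability assigned by ℙ⁻ to the cylinder [ξ₀,…,ξ_{n-1}]. -/
def cylProbQ (p : ℕ → ℝ) (E : ℝ) (ξ : ℕ → ℕ) (n : ℕ) : ℝ :=
  mdist p E (ξ 0) * ∏ i ∈ Finset.range (n - 1), qtrans p E (ξ i) (ξ (i + 1))

/-- Probability assigned by ℙ to the cylinder [ξ₀,…,ξ_{n-1}]. -/
def cylProbP (p : ℕ → ℝ) (E : ℝ) (ξ : ℕ → ℕ) (n : ℕ) : ℝ :=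
  mdist p E (ξ 0) * ∏ i ∈ Finset.range (n - 1), Ptrans p (ξ i) (ξ (i + 1))

/-- The family f₀ = g, f_k = f for k ≥ 1. -/
def fseq (a b : ℝ) (g f : Set.Icc a b → Set.Icc a b) : ℕ → Set.Icc a b → Set.Icc a b :=
  fun k => if k = 0 then g else f

/-- itf fI ξ n = f_{ξ₀} ∘ f_{ξ₁} ∘ ⋯ ∘ f_{ξ_{n-1}}. -/
def itf (a b : ℝ) (fI : ℕ → Set.Icc a b → Set.Icc a b) (ξ : ℕ → ℕ) :
    ℕ → Set.Icc a b → Set.Icc a b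
  | 0 => id
  | n + 1 => fun x => itf a b fI ξ n (fI (ξ n) x)

/-- itfRev fI a n = f_{a_{n-1}} ∘ ⋯ ∘ f_{a_0}  (i.e. f_{a_n}∘⋯∘f_{a_1} with 1-based indexing). -/
def itfRev (a b : ℝ) (fI : ℕ → Set.Icc a b → Set.Icc a b) (c : ℕ → ℕ) :
    ℕ → Set.Icc a b → Set.Icc a b
  | 0 => id
  | n + 1 => fun x => fI (c n) (itfRev a b fI c n x)

/-- I_ξ = ⋂_{n ≥ 1} (f_{ξ₀}∘⋯∘f_{ξ_{n-1}})(I). -/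
def Iset (a b : ℝ) (fI : ℕ → Set.Icc a b → Set.Icc a b) (ξ : ℕ → ℕ) : Set (Set.Icc a b) :=
  ⋂ n : ℕ, itf a b fI ξ (n + 1) '' Set.univ

/-- S = {ξ : diam I_ξ = 0}. -/
def Sset (a b : ℝ) (fI : ℕ → Set.Icc a b → Set.Icc a b) : Set (ℕ → ℕ) :=
  {ξ | EMetric.diam (Iset a b fI ξ) = 0}

/-- The j-th sliceM of a measure on ℕ × I:  μ_j(C) = μ̂({j} × C). -/
def sliceM (a b : ℝ) (μ : Measure (ℕ × Set.Icc a b)) (k : ℕ) : Measure (Set.Icc a b) :=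
  Measure.map Prod.snd (μ.restrict ({k} ×ˢ (Set.univ : Set (Set.Icc a b))))

/-- The Markov operator T:  (Tμ̂)({j}×C) = μ_{j+1}(f_j⁻¹ C) + p_j·μ₀(f_j⁻¹ C). -/
def TOp (a b : ℝ) (p : ℕ → ℝ) (fI : ℕ → Set.Icc a b → Set.Icc a b)
    (μ : Measure (ℕ × Set.Icc a b)) : Measure (ℕ × Set.Icc a b) :=
  Measure.sum fun j =>
    Measure.map (fun x => (j, fI j x))
      (sliceM a b μ (j + 1) + ENNReal.ofReal (p j) • sliceM a b μ 0)

/-- Extend ξ : Fin n → ℕ to ℕ → ℕ by 0. -/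
def padSeq {n : ℕ} (ξ : Fin n → ℕ) : ℕ → ℕ := fun i => if h : i < n then ξ ⟨i, h⟩ else 0

/-- S_nˣ = {ξ : x ∈ I_ξⁿ}. -/
def SnX (a b : ℝ) (fI : ℕ → Set.Icc a b → Set.Icc a b) (x : Set.Icc a b) (n : ℕ) :
    Set (ℕ → ℕ) :=
  {ξ | x ∈ itf a b fI ξ n '' Set.univ}

/-- Σ_n^W = {ω : σ^{iN}(ω) ∉ W for i = 0,…,n-1}, for W the cylinder [ξ₀,…,ξ_{N-1}]. -/
def SigW (ξ : ℕ → ℕ) (N n : ℕ) : Set (ℕ → ℕ) :=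
  {ω | ∀ i < n, ¬ (∀ k < N, ω (i * N + k) = ξ k)}

open Classical in
/-- The block-replacement map H_n: replace every length-N block equal to (ξ₀,…,ξ_{N-1})
by (η₀,…,η_{N-1}). -/
noncomputable def Hn (ξ η : ℕ → ℕ) (N : ℕ) (c : ℕ → ℕ) : ℕ → ℕ :=
  fun i => if (∀ k < N, c (i / N * N + k) = ξ k) then η (i % N) else c i

/-- The splitting condition. -/
def Splitting (a b : ℝ) (fI : ℕ → Set.Icc a b → Set.Icc a b) (P : Measure (ℕ → ℕ)) : Prop :=
  ∃ (l r : ℕ) (c d : ℕ → ℕ), 1 ≤ l ∧ 1 ≤ r ∧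
    0 < P (cyl c l) ∧ 0 < P (cyl d r) ∧ c (l - 1) = d (r - 1) ∧
    (itfRev a b fI c l '' Set.univ) ∩ (itfRev a b fI d r '' Set.univ) = ∅

section AuxCombinatorics

variable {a b : ℝ} {fI : ℕ → Set.Icc a b → Set.Icc a b}

lemma itf_congr {w w' : ℕ → ℕ} (m : ℕ) (h : ∀ i < m, w i = w' i) :
    itf a b fI w m = itf a b fI w' m := by
  induction m with
  | zero => rfl
  | succ n ih =>
    have h1 : itf a b fI w n = itf a b fI w' n := ih (fun i hi => h i (by omega))
    funext x
    show itf a b fI w n (fI (w n) x) = itf a b fI w' n (fI (w' n) x)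
    rw [h1, h n (by omega)]

lemma itf_inj (hinj : ∀ k, Function.Injective (fI k)) (w : ℕ → ℕ) (m : ℕ) :
    Function.Injective (itf a b fI w m) := by
  induction m with
  | zero => exact fun x y h => h
  | succ n ih =>
    intro x y h
    exact hinj (w n) (ih h)

lemma itf_add (w : ℕ → ℕ) (s t : ℕ) :
    itf a b fI w (s + t) = fun x => itf a b fI w s (itf a b fI (fun k => w (s + k)) t x) := by
  induction t with
  | zero => rfl
  | succ n ih =>
    funext x
    show itf a b fI w (s + n) (fI (w (s + n)) x) = _
    rw [ih]
    rfl

lemma itf_eq_itfRev (m : ℕ) : ∀ (w c : ℕ → ℕ), (∀ j < m, c j = w (m - 1 - j)) →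
    itf a b fI w m = itfRev a b fI c m := by
  induction m with
  | zero => intro w c _; rfl
  | succ n ih =>
    intro w c h
    have h1 : itf a b fI w (n + 1) = itf a b fI w (1 + n) := by rw [Nat.add_comm]
    rw [h1, itf_add]
    have h2 : itf a b fI (fun k => w (1 + k)) n = itfRev a b fI c n := by
      apply ih
      intro j hj
      have := h j (by omega)
      have e : n + 1 - 1 - j = 1 + (n - 1 - j) := by omega
      rw [this, e]
    funext x
    show itf a b fI w 1 (itf a b fI (fun k => w (1 + k)) n x) = fI (c n) (itfRev a b fI c n x)
    rw [h2]
    have hc : c n = w 0 := by have := h n (by omega); simpa using this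
    show itf a b fI w 0 (fI (w 0) _) = _
    rw [hc]
    rfl

lemma itfRev_add (u : ℕ → ℕ) (s t : ℕ) :
    itfRev a b fI u (s + t)
      = fun x => itfRev a b fI (fun k => u (s + k)) t (itfRev a b fI u s x) := by
  induction t with
  | zero => rfl
  | succ n ih =>
    funext x
    show fI (u (s + n)) (itfRev a b fI u (s + n) x) = _
    rw [ih]
    rfl

lemma itfRev_congr {u u' : ℕ → ℕ} (m : ℕ) (h : ∀ i < m, u i = u' i) :
    itfRev a b fI u m = itfRev a b fI u' m := by
  induction m with
  | zero => rfl
  | succ n ih =>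
    have h1 : itfRev a b fI u n = itfRev a b fI u' n := ih (fun i hi => h i (by omega))
    funext x
    show fI (u n) (itfRev a b fI u n x) = fI (u' n) (itfRev a b fI u' n x)
    rw [h1, h n (by omega)]

end AuxCombinatorics

section AuxMeasure

lemma cyl_measurable (c : ℕ → ℕ) (M : ℕ) : MeasurableSet (cyl c M) := by
  have : cyl c M = ⋂ i : Fin M, {ω : ℕ → ℕ | ω i = c i} := by
    ext ω
    simp only [cyl, Set.mem_setOf_eq, Set.mem_iInter]
    exact ⟨fun h i => h i i.2, fun h i hi => h ⟨i, hi⟩⟩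
  rw [this]
  refine MeasurableSet.iInter fun i => ?_
  show MeasurableSet ((fun ω : ℕ → ℕ => ω i) ⁻¹' {c i})
  exact (measurable_pi_apply (i : ℕ)) (measurableSet_singleton (c i))

lemma padSeq_lt {M : ℕ} (w : Fin M → ℕ) (i : ℕ) (hi : i < M) :
    padSeq w i = w ⟨i, hi⟩ := by simp [padSeq, hi]

lemma padSeq_ge {M : ℕ} (w : Fin M → ℕ) (i : ℕ) (hi : M ≤ i) :
    padSeq w i = 0 := by simp [padSeq, Nat.not_lt.mpr hi]

lemma meas_eq_tsum (Pm : Measure (ℕ → ℕ)) (M : ℕ) (D : Set (ℕ → ℕ))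
    (hD : ∀ ω ω' : ℕ → ℕ, (∀ i < M, ω i = ω' i) → ω ∈ D → ω' ∈ D) :
    Pm D = ∑' w : {w : Fin M → ℕ // padSeq w ∈ D}, Pm (cyl (padSeq w.1) M) := by
  have hcover : D = ⋃ w : {w : Fin M → ℕ // padSeq w ∈ D}, cyl (padSeq w.1) M := by
    ext ω
    constructor
    · intro hω
      have hmem : padSeq (fun i : Fin M => ω i) ∈ D := by
        apply hD ω _ _ hω
        intro i hi
        rw [padSeq_lt _ i hi]
      refine Set.mem_iUnion.mpr ⟨⟨fun i : Fin M => ω i, hmem⟩, ?_⟩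
      intro i hi
      rw [padSeq_lt _ i hi]
    · intro hω
      obtain ⟨w, hw⟩ := Set.mem_iUnion.mp hω
      exact hD (padSeq w.1) ω (fun i hi => (hw i hi).symm) w.2
  have hdisj : Pairwise (Function.onFun Disjoint
      fun w : {w : Fin M → ℕ // padSeq w ∈ D} => cyl (padSeq w.1) M) := by
    intro w w' hne
    rw [Function.onFun, Set.disjoint_left]
    intro ω h1 h2
    apply hne
    apply Subtype.ext
    funext i
    have e1 := h1 i i.2
    have e2 := h2 i i.2
    rw [padSeq_lt _ i i.2] at e1
    rw [padSeq_lt _ i i.2] at e2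
    rw [← e1, ← e2]
  conv_lhs => rw [hcover]
  exact measure_iUnion hdisj (fun w => cyl_measurable _ M)

end AuxMeasure

section AuxPositivity

variable {p : ℕ → ℝ} {E : ℝ}

lemma Ptrans_nonneg (hp : ∀ n, 0 ≤ p n) (i j : ℕ) : 0 ≤ Ptrans p i j := by
  unfold Ptrans
  split
  · exact hp j
  · split <;> norm_num

lemma tailSum_pos (hp : ∀ n, 0 ≤ p n) (hp1 : HasSum p 1)
    (hsupp : ∀ N : ℕ, ∃ n, N ≤ n ∧ 0 < p n) (i : ℕ) : 0 < tailSum p i := by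
  obtain ⟨n0, hn0, hn0p⟩ := hsupp i
  have hsum : Summable fun j => p (i + j) :=
    hp1.summable.comp_injective fun x y h => by omega
  have hle : p (i + (n0 - i)) ≤ tailSum p i :=
    Summable.le_tsum hsum (n0 - i) (fun j _ => hp _)
  have : i + (n0 - i) = n0 := by omega
  rw [this] at hle
  linarith

lemma E_nonneg (hp : ∀ n, 0 ≤ p n) (hE : E = ∑' n : ℕ, (n : ℝ) * p n) : 0 ≤ E := by
  rw [hE]
  exact tsum_nonneg fun n => mul_nonneg (Nat.cast_nonneg n) (hp n)

lemma mdist_pos (hp : ∀ n, 0 ≤ p n) (hp1 : HasSum p 1)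
    (hsupp : ∀ N : ℕ, ∃ n, N ≤ n ∧ 0 < p n)
    (hE : E = ∑' n : ℕ, (n : ℝ) * p n) (i : ℕ) : 0 < mdist p E i := by
  have h1 : (0:ℝ) < 1 + E := by have := E_nonneg hp hE; linarith
  exact div_pos (tailSum_pos hp hp1 hsupp i) h1

lemma qtrans_nonneg (hp : ∀ n, 0 ≤ p n) (hp1 : HasSum p 1)
    (hsupp : ∀ N : ℕ, ∃ n, N ≤ n ∧ 0 < p n)
    (hE : E = ∑' n : ℕ, (n : ℝ) * p n) (i j : ℕ) : 0 ≤ qtrans p E i j :=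
  mul_nonneg (div_nonneg (mdist_pos hp hp1 hsupp hE j).le (mdist_pos hp hp1 hsupp hE i).le)
    (Ptrans_nonneg hp j i)

lemma qtrans_pos (hp : ∀ n, 0 ≤ p n) (hp1 : HasSum p 1)
    (hsupp : ∀ N : ℕ, ∃ n, N ≤ n ∧ 0 < p n)
    (hE : E = ∑' n : ℕ, (n : ℝ) * p n) {i j : ℕ} (h : 0 < Ptrans p j i) :
    0 < qtrans p E i j :=
  mul_pos (div_pos (mdist_pos hp hp1 hsupp hE j) (mdist_pos hp hp1 hsupp hE i)) h

end AuxPositivity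

section AuxBlocks

/-- Block j of w equals the word ξ. -/
def blockEq (ξ : ℕ → ℕ) (N j : ℕ) (w : ℕ → ℕ) : Prop := ∀ k < N, w (j * N + k) = ξ k

/-- Replace block j of w by the word η. -/
def repBlock (η : ℕ → ℕ) (N j : ℕ) (w : ℕ → ℕ) : ℕ → ℕ :=
  fun i => if j * N ≤ i ∧ i < j * N + N then η (i - j * N) else w i

open Classical in
/-- Replace each of the blocks 0,…,j-1 that equal ξ by η, successively. -/
noncomputable def repAll (ξ η : ℕ → ℕ) (N : ℕ) : ℕ → (ℕ → ℕ) → ℕ → ℕ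
  | 0, w => w
  | j + 1, w =>
    if blockEq ξ N j (repAll ξ η N j w) then repBlock η N j (repAll ξ η N j w)
    else repAll ξ η N j w

open Classical in
lemma repAll_succ (ξ η : ℕ → ℕ) (N j : ℕ) (w : ℕ → ℕ) :
    repAll ξ η N (j + 1) w
      = if blockEq ξ N j (repAll ξ η N j w) then repBlock η N j (repAll ξ η N j w)
        else repAll ξ η N j w := rfl

lemma repBlock_in (η : ℕ → ℕ) (N j k : ℕ) (w : ℕ → ℕ) (hk : k < N) :
    repBlock η N j w (j * N + k) = η k := by
  unfold repBlock
  rw [if_pos (by omega)]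
  congr 1
  omega

lemma repBlock_out (η : ℕ → ℕ) (N j i : ℕ) (w : ℕ → ℕ)
    (h : ¬(j * N ≤ i ∧ i < j * N + N)) : repBlock η N j w i = w i := by
  unfold repBlock
  rw [if_neg h]

lemma repAll_ge (ξ η : ℕ → ℕ) (N : ℕ) (j : ℕ) (w : ℕ → ℕ) :
    ∀ i, j * N ≤ i → repAll ξ η N j w i = w i := by
  induction j with
  | zero => intro i _; rfl
  | succ m ih =>
    intro i hi
    have hm : (m + 1) * N = m * N + N := Nat.succ_mul m N
    have h1 : repAll ξ η N m w i = w i := ih i (by omega)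
    show repAll ξ η N (m + 1) w i = w i
    unfold repAll
    split
    · rw [repBlock_out _ _ _ _ _ (by omega)]
      exact h1
    · exact h1

lemma repAll_lt_stable (ξ η : ℕ → ℕ) (N : ℕ) (m j : ℕ) (hj : j ≤ m) (w : ℕ → ℕ) :
    ∀ i < j * N, repAll ξ η N m w i = repAll ξ η N j w i := by
  induction m with
  | zero =>
    intro i _
    have : j = 0 := by omega
    subst this; rfl
  | succ m ih =>
    intro i hi
    rcases Nat.eq_or_lt_of_le hj with h | h
    · subst h; rfl
    · have hj' : j ≤ m := by omega
      have hjm : j * N ≤ m * N := Nat.mul_le_mul_right N hj'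
      have h1 : repAll ξ η N m w i = repAll ξ η N j w i := ih hj' i hi
      show repAll ξ η N (m + 1) w i = _
      rw [repAll_succ]
      split
      · rw [repBlock_out _ _ _ _ _ (by omega)]
        exact h1
      · exact h1

lemma blockEq_repAll_iff (ξ η ξ' : ℕ → ℕ) (N : ℕ) (j j' : ℕ) (hj : j ≤ j') (w : ℕ → ℕ) :
    blockEq ξ' N j' (repAll ξ η N j w) ↔ blockEq ξ' N j' w := by
  have hle : j * N ≤ j' * N := Nat.mul_le_mul_right N hj
  unfold blockEq
  constructor
  · intro h k hk
    rw [← repAll_ge ξ η N j w (j' * N + k) (by omega)]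
    exact h k hk
  · intro h k hk
    rw [repAll_ge ξ η N j w (j' * N + k) (by omega)]
    exact h k hk

open Classical in
lemma repAll_block_final (ξ η : ℕ → ℕ) (N n j k : ℕ) (hj : j < n) (hk : k < N) (w : ℕ → ℕ) :
    repAll ξ η N n w (j * N + k)
      = if blockEq ξ N j w then η k else w (j * N + k) := by
  have hm : (j + 1) * N = j * N + N := Nat.succ_mul j N
  have h1 : repAll ξ η N n w (j * N + k) = repAll ξ η N (j + 1) w (j * N + k) :=
    repAll_lt_stable ξ η N n (j + 1) hj w _ (by omega)
  rw [h1]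
  show (if blockEq ξ N j (repAll ξ η N j w) then repBlock η N j (repAll ξ η N j w)
    else repAll ξ η N j w) (j * N + k) = _
  rw [blockEq_repAll_iff ξ η ξ N j j le_rfl w]  -- rewrite condition? (may fail)
  by_cases hbe : blockEq ξ N j w
  · rw [if_pos hbe, if_pos hbe]
    exact repBlock_in η N j k _ hk
  · rw [if_neg hbe, if_neg hbe]
    exact repAll_ge ξ η N j w _ (by omega)

lemma repAll_not_blockEq (ξ η : ℕ → ℕ) (N n : ℕ) (hN : 1 ≤ N)
    (hne : ∃ k < N, ξ k ≠ η k) (w : ℕ → ℕ) :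
    ∀ j < n, ¬ blockEq ξ N j (repAll ξ η N n w) := by
  intro j hj hcon
  by_cases hbe : blockEq ξ N j w
  · obtain ⟨k, hk, hkne⟩ := hne
    have := hcon k hk
    rw [repAll_block_final ξ η N n j k hj hk w, if_pos hbe] at this
    exact hkne this.symm
  · apply hbe
    intro k hk
    have := hcon k hk
    rw [repAll_block_final ξ η N n j k hj hk w, if_neg hbe] at this
    exact this

end AuxBlocks

section AuxWeight

lemma cylProbQ_repBlock_le (p : ℕ → ℝ) (E : ℝ)
    (hq0 : ∀ i j, 0 ≤ qtrans p E i j) (hm0 : ∀ i, 0 ≤ mdist p E i)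
    (ξ η : ℕ → ℕ) (N n j : ℕ) (hN : 1 ≤ N) (hj : j < n)
    (h0 : ξ 0 = η 0) (hN1 : ξ (N - 1) = η (N - 1))
    (hqle : ∏ k ∈ Finset.range (N - 1), qtrans p E (ξ k) (ξ (k + 1))
      ≤ ∏ k ∈ Finset.range (N - 1), qtrans p E (η k) (η (k + 1)))
    (w : ℕ → ℕ) (hb : blockEq ξ N j w) :
    cylProbQ p E w (n * N) ≤ cylProbQ p E (repBlock η N j w) (n * N) := by
  set M := n * N with hM
  set w' := repBlock η N j w with hw'
  have hsuc : (j + 1) * N = j * N + N := Nat.succ_mul j N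
  have hjN : j * N + N ≤ M := by
    have h1 : (j + 1) * N ≤ n * N := Nat.mul_le_mul_right N (Nat.succ_le_of_lt hj)
    have h2 : (j + 1) * N = j * N + N := by ring
    omega
  have hsub : Finset.Ico (j * N) (j * N + (N - 1)) ⊆ Finset.range (M - 1) := by
    intro i hi
    rw [Finset.mem_Ico] at hi
    rw [Finset.mem_range]
    omega
  -- values of w and w' inside the block
  have hwin : ∀ k < N, w (j * N + k) = ξ k := hb
  have hwin' : ∀ k < N, w' (j * N + k) = η k := fun k hk => repBlock_in η N j k w hk
  -- head factor
  have hhead : mdist p E (w' 0) = mdist p E (w 0) := by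
    by_cases hz : j * N ≤ 0 ∧ 0 < j * N + N
    · have hj0 : j * N = 0 := by omega
      have e1 : w' 0 = η 0 := by
        have := hwin' 0 (by omega)
        rwa [hj0, Nat.add_zero] at this
      have e2 : w 0 = ξ 0 := by
        have := hwin 0 (by omega)
        rwa [hj0, Nat.add_zero] at this
      rw [e1, e2, h0]
    · rw [hw', repBlock_out η N j 0 w (by omega)]
  -- off-block factors agree
  have hoff : ∀ i ∈ Finset.range (M - 1) \ Finset.Ico (j * N) (j * N + (N - 1)),
      qtrans p E (w' i) (w' (i + 1)) = qtrans p E (w i) (w (i + 1)) := by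
    intro i hi
    rw [Finset.mem_sdiff, Finset.mem_range, Finset.mem_Ico] at hi
    obtain ⟨hiM, hiI⟩ := hi
    by_cases h1 : j * N ≤ i ∧ i < j * N + N
    · -- i is the last block coordinate
      have hie : i = j * N + (N - 1) := by omega
      have e1 : w' i = w i := by
        have a1 : w' i = η (N - 1) := by rw [hie]; exact hwin' (N - 1) (by omega)
        have a2 : w i = ξ (N - 1) := by rw [hie]; exact hwin (N - 1) (by omega)
        rw [a1, a2, hN1]
      have e2 : w' (i + 1) = w (i + 1) := by
        rw [hw', repBlock_out η N j (i + 1) w (by omega)]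
      rw [e1, e2]
    · have e1 : w' i = w i := by rw [hw', repBlock_out η N j i w h1]
      by_cases h2 : j * N ≤ i + 1 ∧ i + 1 < j * N + N
      · have hie : i + 1 = j * N := by omega
        have e2 : w' (i + 1) = w (i + 1) := by
          have a1 : w' (i + 1) = η 0 := by
            have := hwin' 0 (by omega)
            rwa [Nat.add_zero, ← hie] at this
          have a2 : w (i + 1) = ξ 0 := by
            have := hwin 0 (by omega)
            rwa [Nat.add_zero, ← hie] at this
          rw [a1, a2, h0]
        rw [e1, e2]
      · rw [e1, hw', repBlock_out η N j (i + 1) w h2]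
  -- block factors
  have hblk : ∏ i ∈ Finset.Ico (j * N) (j * N + (N - 1)), qtrans p E (w i) (w (i + 1))
      = ∏ k ∈ Finset.range (N - 1), qtrans p E (ξ k) (ξ (k + 1)) := by
    rw [Finset.prod_Ico_eq_prod_range]
    have e : j * N + (N - 1) - j * N = N - 1 := by omega
    rw [e]
    apply Finset.prod_congr rfl
    intro k hk
    rw [Finset.mem_range] at hk
    have a1 : w (j * N + k) = ξ k := hwin k (by omega)
    have a2 : w (j * N + k + 1) = ξ (k + 1) := by
      have := hwin (k + 1) (by omega)
      rwa [← Nat.add_assoc] at this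
    rw [a1, a2]
  have hblk' : ∏ i ∈ Finset.Ico (j * N) (j * N + (N - 1)), qtrans p E (w' i) (w' (i + 1))
      = ∏ k ∈ Finset.range (N - 1), qtrans p E (η k) (η (k + 1)) := by
    rw [Finset.prod_Ico_eq_prod_range]
    have e : j * N + (N - 1) - j * N = N - 1 := by omega
    rw [e]
    apply Finset.prod_congr rfl
    intro k hk
    rw [Finset.mem_range] at hk
    have a1 : w' (j * N + k) = η k := hwin' k (by omega)
    have a2 : w' (j * N + k + 1) = η (k + 1) := by
      have := hwin' (k + 1) (by omega)
      rwa [← Nat.add_assoc] at this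
    rw [a1, a2]
  -- split the products
  have hsplitw : ∏ i ∈ Finset.range (M - 1), qtrans p E (w i) (w (i + 1))
      = (∏ i ∈ Finset.range (M - 1) \ Finset.Ico (j * N) (j * N + (N - 1)),
          qtrans p E (w i) (w (i + 1)))
        * ∏ k ∈ Finset.range (N - 1), qtrans p E (ξ k) (ξ (k + 1)) := by
    rw [← hblk, Finset.prod_sdiff hsub]
  have hsplitw' : ∏ i ∈ Finset.range (M - 1), qtrans p E (w' i) (w' (i + 1))
      = (∏ i ∈ Finset.range (M - 1) \ Finset.Ico (j * N) (j * N + (N - 1)),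
          qtrans p E (w i) (w (i + 1)))
        * ∏ k ∈ Finset.range (N - 1), qtrans p E (η k) (η (k + 1)) := by
    rw [← hblk', ← Finset.prod_congr rfl hoff, Finset.prod_sdiff hsub]
  show mdist p E (w 0) * _ ≤ mdist p E (w' 0) * _
  rw [hhead, hsplitw, hsplitw']
  apply mul_le_mul_of_nonneg_left _ (hm0 (w 0))
  apply mul_le_mul_of_nonneg_left hqle
  exact Finset.prod_nonneg fun i _ => hq0 _ _

end AuxWeight

section AuxCore

lemma cylProbQ_congr (p : ℕ → ℝ) (E : ℝ) {w w' : ℕ → ℕ} (M : ℕ) (hM : 1 ≤ M)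
    (h : ∀ i < M, w i = w' i) : cylProbQ p E w M = cylProbQ p E w' M := by
  unfold cylProbQ
  rw [h 0 (by omega)]
  congr 1
  apply Finset.prod_congr rfl
  intro i hi
  rw [Finset.mem_range] at hi
  rw [h i (by omega), h (i + 1) (by omega)]

lemma cylProbQ_repAll_le (p : ℕ → ℝ) (E : ℝ)
    (hq0 : ∀ i j, 0 ≤ qtrans p E i j) (hm0 : ∀ i, 0 ≤ mdist p E i)
    (ξ η : ℕ → ℕ) (N n : ℕ) (hN : 1 ≤ N)
    (h0 : ξ 0 = η 0) (hN1 : ξ (N - 1) = η (N - 1))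
    (hqle : ∏ k ∈ Finset.range (N - 1), qtrans p E (ξ k) (ξ (k + 1))
      ≤ ∏ k ∈ Finset.range (N - 1), qtrans p E (η k) (η (k + 1)))
    (w : ℕ → ℕ) :
    ∀ jj ≤ n, cylProbQ p E w (n * N) ≤ cylProbQ p E (repAll ξ η N jj w) (n * N) := by
  intro jj
  induction jj with
  | zero => intro _; exact le_refl _
  | succ m ih =>
    intro hm
    have h1 := ih (by omega)
    rw [repAll_succ]
    by_cases hbe : blockEq ξ N m (repAll ξ η N m w)
    · rw [if_pos hbe]
      exact h1.trans (cylProbQ_repBlock_le p E hq0 hm0 ξ η N n m hN (by omega) h0 hN1 hqle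
        (repAll ξ η N m w) hbe)
    · rw [if_neg hbe]
      exact h1

variable {a b : ℝ} {fI : ℕ → Set.Icc a b → Set.Icc a b}

lemma mem_image_block (w ζ : ℕ → ℕ) (N n j : ℕ) (hj : j < n) (x : Set.Icc a b)
    (hbw : ∀ k < N, w (j * N + k) = ζ k)
    (hx : x ∈ itf a b fI w (n * N) '' Set.univ) :
    x ∈ itf a b fI w (j * N) '' (itf a b fI ζ N '' Set.univ) := by
  have hle : (j + 1) * N ≤ n * N := Nat.mul_le_mul_right N (Nat.succ_le_of_lt hj)
  have he : (j + 1) * N = j * N + N := by ring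
  set t := n * N - (j * N + N) with ht
  have hMe : n * N = j * N + (N + t) := by omega
  obtain ⟨y, -, hy⟩ := hx
  rw [hMe] at hy
  have hy2 : itf a b fI w (j * N)
      (itf a b fI (fun k => w (j * N + k)) (N + t) y) = x :=
    ((congrFun (itf_add (a := a) (b := b) (fI := fI) w (j * N) (N + t)) y).symm).trans hy
  have hy3 : itf a b fI (fun k => w (j * N + k)) (N + t) y
      = itf a b fI (fun k => w (j * N + k)) N
        (itf a b fI (fun k => w (j * N + (N + k))) t y) := by
    have := congrFun (itf_add (a := a) (b := b) (fI := fI) (fun k => w (j * N + k)) N t) y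
    simpa [Nat.add_assoc] using this
  have hcg : itf a b fI (fun k => w (j * N + k)) N = itf a b fI ζ N :=
    itf_congr N (fun i hi => hbw i hi)
  refine ⟨itf a b fI ζ N (itf a b fI (fun k => w (j * N + (N + k))) t y), ?_, ?_⟩
  · exact ⟨_, Set.mem_univ _, rfl⟩
  · rw [← hcg, ← hy3]
    exact hy2

lemma core_disjoint (hinj : ∀ k, Function.Injective (fI k))
    (ξ η : ℕ → ℕ) (N n j : ℕ) (hj : j < n) (x : Set.Icc a b)
    (hdisj : itf a b fI ξ N '' Set.univ ∩ itf a b fI η N '' Set.univ = ∅)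
    (w1 w2 : ℕ → ℕ)
    (hagree : ∀ i < j * N, w1 i = w2 i)
    (hb1 : ∀ k < N, w1 (j * N + k) = ξ k)
    (hb2 : ∀ k < N, w2 (j * N + k) = η k)
    (hx1 : x ∈ itf a b fI w1 (n * N) '' Set.univ)
    (hx2 : x ∈ itf a b fI w2 (n * N) '' Set.univ) : False := by
  have h1 := mem_image_block w1 ξ N n j hj x hb1 hx1
  have h2 := mem_image_block w2 η N n j hj x hb2 hx2
  have hcg : itf a b fI w2 (j * N) = itf a b fI w1 (j * N) :=
    itf_congr (j * N) (fun i hi => (hagree i hi).symm)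
  rw [hcg] at h2
  obtain ⟨z1, hz1m, hz1⟩ := h1
  obtain ⟨z2, hz2m, hz2⟩ := h2
  have hz : z1 = z2 := itf_inj hinj w1 (j * N) (by rw [hz1, hz2])
  have : z1 ∈ itf a b fI ξ N '' Set.univ ∩ itf a b fI η N '' Set.univ :=
    ⟨hz1m, hz ▸ hz2m⟩
  rw [hdisj] at this
  exact this

end AuxCore

section AuxInj

variable {a b : ℝ} {fI : ℕ → Set.Icc a b → Set.Icc a b}

open Classical in
lemma repAll_inj_on (hinj : ∀ k, Function.Injective (fI k))
    (ξ η : ℕ → ℕ) (N n : ℕ) (hN : 1 ≤ N) (x : Set.Icc a b)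
    (hdisj : itf a b fI ξ N '' Set.univ ∩ itf a b fI η N '' Set.univ = ∅)
    (w1 w2 : ℕ → ℕ)
    (ht1 : ∀ i, n * N ≤ i → w1 i = 0) (ht2 : ∀ i, n * N ≤ i → w2 i = 0)
    (hx1 : x ∈ itf a b fI w1 (n * N) '' Set.univ)
    (hx2 : x ∈ itf a b fI w2 (n * N) '' Set.univ)
    (heq : repAll ξ η N n w1 = repAll ξ η N n w2) : w1 = w2 := by
  have hcoord : ∀ j k, j < n → k < N → (blockEq ξ N j w1 ↔ blockEq ξ N j w2) →
      w1 (j * N + k) = w2 (j * N + k) := by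
    intro j k hj hk hiff
    have e1 := repAll_block_final ξ η N n j k hj hk w1
    have e2 := repAll_block_final ξ η N n j k hj hk w2
    have e3 : repAll ξ η N n w1 (j * N + k) = repAll ξ η N n w2 (j * N + k) := by rw [heq]
    by_cases hbe : blockEq ξ N j w1
    · rw [hbe k hk, (hiff.mp hbe) k hk]
    · rw [if_neg hbe] at e1
      rw [if_neg (fun hc => hbe (hiff.mpr hc))] at e2
      rw [← e1, ← e2]
      exact e3
  by_contra hne
  have hex : ∃ j, j < n ∧ ¬(blockEq ξ N j w1 ↔ blockEq ξ N j w2) := by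
    by_contra hall
    push_neg at hall
    apply hne
    funext i
    by_cases hi : n * N ≤ i
    · rw [ht1 i hi, ht2 i hi]
    · push_neg at hi
      have hN0 : 0 < N := hN
      have hjn : i / N < n := (Nat.div_lt_iff_lt_mul hN0).mpr (by omega)
      have hkN : i % N < N := Nat.mod_lt _ hN0
      have hieq : i / N * N + i % N = i := by
        rw [Nat.mul_comm]; exact Nat.div_add_mod i N
      have hiff : blockEq ξ N (i / N) w1 ↔ blockEq ξ N (i / N) w2 :=
        hall (i / N) hjn
      have := hcoord (i / N) (i % N) hjn hkN hiff
      rw [hieq] at this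
      exact this
  classical
  let j := Nat.find hex
  obtain ⟨hjn, hniff⟩ : j < n ∧ ¬(blockEq ξ N j w1 ↔ blockEq ξ N j w2) := Nat.find_spec hex
  have hagree : ∀ i < j * N, w1 i = w2 i := by
    intro i hi
    have hN0 : 0 < N := hN
    have hjj : i / N < j := (Nat.div_lt_iff_lt_mul hN0).mpr (by omega)
    have hjn' : i / N < n := lt_trans hjj hjn
    have hmin := Nat.find_min hex hjj
    have hiff : blockEq ξ N (i / N) w1 ↔ blockEq ξ N (i / N) w2 := by
      by_contra hc
      exact hmin ⟨hjn', hc⟩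
    have hkN : i % N < N := Nat.mod_lt _ hN0
    have hieq : i / N * N + i % N = i := by
      rw [Nat.mul_comm]; exact Nat.div_add_mod i N
    have := hcoord (i / N) (i % N) hjn' hkN hiff
    rw [hieq] at this
    exact this
  by_cases b1 : blockEq ξ N j w1
  · have b2 : ¬ blockEq ξ N j w2 := fun hc => hniff ⟨fun _ => hc, fun _ => b1⟩
    have hb2' : ∀ k < N, w2 (j * N + k) = η k := by
      intro k hk
      have e1 := repAll_block_final ξ η N n j k hjn hk w1
      have e2 := repAll_block_final ξ η N n j k hjn hk w2
      rw [if_pos b1] at e1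
      rw [if_neg b2] at e2
      rw [← e2, ← heq, e1]
    exact core_disjoint hinj ξ η N n j hjn x hdisj w1 w2 hagree b1 hb2' hx1 hx2
  · have b2 : blockEq ξ N j w2 := by
      by_contra b2
      exact hniff ⟨fun hc => absurd hc b1, fun hc => absurd hc b2⟩
    have hb1' : ∀ k < N, w1 (j * N + k) = η k := by
      intro k hk
      have e1 := repAll_block_final ξ η N n j k hjn hk w1
      have e2 := repAll_block_final ξ η N n j k hjn hk w2
      rw [if_neg b1] at e1
      rw [if_pos b2] at e2
      rw [← e1, heq, e2]
    exact core_disjoint hinj ξ η N n j hjn x hdisj w2 w1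
      (fun i hi => (hagree i hi).symm) b2 hb1' hx2 hx1

end AuxInj

section MainAux

lemma main_aux {a b : ℝ} (fI : ℕ → Set.Icc a b → Set.Icc a b)
    (hinj : ∀ k, Function.Injective (fI k))
    (p : ℕ → ℝ) (E : ℝ)
    (hq0 : ∀ i j, 0 ≤ qtrans p E i j) (hm0 : ∀ i, 0 ≤ mdist p E i)
    (Pm : Measure (ℕ → ℕ))
    (hPm : ∀ n, 1 ≤ n → ∀ ξ : ℕ → ℕ, Pm (cyl ξ n) = ENNReal.ofReal (cylProbQ p E ξ n))
    (N : ℕ) (hN : 1 ≤ N) (ξ η : ℕ → ℕ)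
    (h0 : ξ 0 = η 0) (hN1 : ξ (N - 1) = η (N - 1))
    (hqle : ∏ k ∈ Finset.range (N - 1), qtrans p E (ξ k) (ξ (k + 1))
      ≤ ∏ k ∈ Finset.range (N - 1), qtrans p E (η k) (η (k + 1)))
    (hdisj : itf a b fI ξ N '' Set.univ ∩ itf a b fI η N '' Set.univ = ∅)
    (n : ℕ) (hn : 1 ≤ n) (x : Set.Icc a b) :
    Pm (SnX a b fI x (n * N)) ≤ Pm (SigW ξ N n) := by
  set M := n * N with hMdef
  have hM1 : 1 ≤ M := by
    have := Nat.mul_le_mul hn hN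
    simpa using this
  -- ξ and η differ somewhere
  have hne : ∃ k < N, ξ k ≠ η k := by
    by_contra hc
    push_neg at hc
    have : itf a b fI ξ N = itf a b fI η N := itf_congr N hc
    have hmem : itf a b fI ξ N x ∈ itf a b fI ξ N '' Set.univ ∩ itf a b fI η N '' Set.univ :=
      ⟨⟨x, Set.mem_univ _, rfl⟩, by rw [← this]; exact ⟨x, Set.mem_univ _, rfl⟩⟩
    rw [hdisj] at hmem
    exact hmem
  -- both sets are determined by the first M coordinates
  have hSdet : ∀ ω ω' : ℕ → ℕ, (∀ i < M, ω i = ω' i) →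
      ω ∈ SnX a b fI x M → ω' ∈ SnX a b fI x M := by
    intro ω ω' h hω
    show x ∈ itf a b fI ω' M '' Set.univ
    rw [← itf_congr M h]
    exact hω
  have hTdet : ∀ ω ω' : ℕ → ℕ, (∀ i < M, ω i = ω' i) →
      ω ∈ SigW ξ N n → ω' ∈ SigW ξ N n := by
    intro ω ω' h hω i hi hc
    apply hω i hi
    intro k hk
    rw [← hc k hk]
    apply h
    have h1 : (i + 1) * N ≤ n * N := Nat.mul_le_mul_right N (Nat.succ_le_of_lt hi)
    have h2 : (i + 1) * N = i * N + N := by ring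
    omega
  rw [meas_eq_tsum Pm M (SnX a b fI x M) hSdet, meas_eq_tsum Pm M (SigW ξ N n) hTdet]
  -- the block-replacement map
  have hrep_pad : ∀ w : Fin M → ℕ,
      padSeq (fun i : Fin M => repAll ξ η N n (padSeq w) i) = repAll ξ η N n (padSeq w) := by
    intro w
    funext i
    by_cases hi : i < M
    · rw [padSeq_lt _ i hi]
    · push_neg at hi
      rw [padSeq_ge _ i hi, repAll_ge ξ η N n (padSeq w) i (by omega),
        padSeq_ge _ i hi]
  have hΨmem : ∀ w : {w : Fin M → ℕ // padSeq w ∈ SnX a b fI x M},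
      padSeq (fun i : Fin M => repAll ξ η N n (padSeq w.1) i) ∈ SigW ξ N n := by
    intro w
    rw [hrep_pad w.1]
    intro i hi hc
    exact repAll_not_blockEq ξ η N n hN hne (padSeq w.1) i hi hc
  set Ψ : {w : Fin M → ℕ // padSeq w ∈ SnX a b fI x M} →
      {w : Fin M → ℕ // padSeq w ∈ SigW ξ N n} :=
    fun w => ⟨fun i : Fin M => repAll ξ η N n (padSeq w.1) i, hΨmem w⟩ with hΨdef
  have hΨinj : Function.Injective Ψ := by
    intro w w' h
    have h1 : repAll ξ η N n (padSeq w.1) = repAll ξ η N n (padSeq w'.1) := by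
      funext i
      by_cases hi : i < M
      · have := congrFun (congrArg Subtype.val h) ⟨i, hi⟩
        exact this
      · push_neg at hi
        rw [repAll_ge ξ η N n (padSeq w.1) i (by omega),
          repAll_ge ξ η N n (padSeq w'.1) i (by omega),
          padSeq_ge _ i hi, padSeq_ge _ i hi]
    have h2 : padSeq w.1 = padSeq w'.1 :=
      repAll_inj_on hinj ξ η N n hN x hdisj (padSeq w.1) (padSeq w'.1)
        (fun i hi => padSeq_ge _ i hi) (fun i hi => padSeq_ge _ i hi)
        w.2 w'.2 h1
    apply Subtype.ext
    funext i
    have := congrFun h2 i.1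
    rwa [padSeq_lt _ i.1 i.2, padSeq_lt _ i.1 i.2] at this
  calc
    ∑' w : {w : Fin M → ℕ // padSeq w ∈ SnX a b fI x M}, Pm (cyl (padSeq w.1) M)
      ≤ ∑' w : {w : Fin M → ℕ // padSeq w ∈ SnX a b fI x M}, Pm (cyl (padSeq (Ψ w).1) M) := by
        apply ENNReal.tsum_le_tsum
        intro w
        rw [hPm M hM1, hPm M hM1]
        apply ENNReal.ofReal_le_ofReal
        have he : padSeq (Ψ w).1 = repAll ξ η N n (padSeq w.1) := hrep_pad w.1
        rw [he]
        exact cylProbQ_repAll_le p E hq0 hm0 ξ η N n hN h0 hN1 hqle (padSeq w.1) n le_rfl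
    _ ≤ ∑' τ : {w : Fin M → ℕ // padSeq w ∈ SigW ξ N n}, Pm (cyl (padSeq τ.1) M) :=
        ENNReal.tsum_comp_le_tsum_of_injective hΨinj
          (fun τ => Pm (cyl (padSeq τ.1) M))

end MainAux

section AuxWord

/-- The padded word 0,…,0,t,t-1,…,c₀+1,c₀,c₁,…,c_{l-1} (z zeros, then descent of length A,
then the word c). -/
def mkWord (c : ℕ → ℕ) (t z A : ℕ) : ℕ → ℕ :=
  fun k => if k < z then 0 else if k < z + A then t - (k - z) else c (k - (z + A))

lemma mkWord_eval_lt {c : ℕ → ℕ} {t z A k : ℕ} (hk : k < z) : mkWord c t z A k = 0 := by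
  unfold mkWord; rw [if_pos hk]

lemma mkWord_eval_mid {c : ℕ → ℕ} {t z A k : ℕ} (h1 : z ≤ k) (h2 : k < z + A) :
    mkWord c t z A k = t - (k - z) := by
  unfold mkWord; rw [if_neg (by omega), if_pos h2]

lemma mkWord_eval_hi {c : ℕ → ℕ} {t z A k : ℕ} (h : z + A ≤ k) :
    mkWord c t z A k = c (k - (z + A)) := by
  unfold mkWord; rw [if_neg (by omega), if_neg (by omega)]

lemma mkWord_adm (p : ℕ → ℝ) (hp0 : 0 < p 0) (c : ℕ → ℕ) (l t z A : ℕ)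
    (hl : 1 ≤ l) (hz : 1 ≤ z) (ht : c 0 ≤ t) (htp : 0 < p t) (hA : A = t - c 0)
    (hc : ∀ i, i + 1 < l → 0 < Ptrans p (c i) (c (i + 1))) :
    ∀ j, j + 1 < z + A + l →
      0 < Ptrans p (mkWord c t z A j) (mkWord c t z A (j + 1)) := by
  intro j hj
  by_cases h1 : j + 1 < z
  · rw [mkWord_eval_lt (show j < z by omega), mkWord_eval_lt h1]
    simpa [Ptrans] using hp0
  · by_cases h2 : j + 1 = z
    · rw [mkWord_eval_lt (show j < z by omega)]
      have hval : mkWord c t z A (j + 1) = t := by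
        by_cases hA0 : 0 < A
        · rw [mkWord_eval_mid (by omega) (by omega)]
          omega
        · rw [mkWord_eval_hi (by omega)]
          have e : j + 1 - (z + A) = 0 := by omega
          rw [e]
          omega
      rw [hval]
      simpa [Ptrans] using htp
    · by_cases h3 : j + 1 < z + A
      · rw [mkWord_eval_mid (by omega) (by omega), mkWord_eval_mid (by omega) h3]
        have e : t - (j - z) = (t - (j + 1 - z)) + 1 := by omega
        rw [e]
        unfold Ptrans
        rw [if_neg (by omega), if_pos rfl]
        norm_num
      · by_cases h4 : j + 1 = z + A
        · rw [mkWord_eval_mid (by omega) (by omega), mkWord_eval_hi (by omega)]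
          have e1 : t - (j - z) = c 0 + 1 := by omega
          have e2 : j + 1 - (z + A) = 0 := by omega
          rw [e1, e2]
          unfold Ptrans
          rw [if_neg (by omega), if_pos rfl]
          norm_num
        · rw [mkWord_eval_hi (by omega), mkWord_eval_hi (by omega)]
          have e2 : j + 1 - (z + A) = (j - (z + A)) + 1 := by omega
          rw [e2]
          exact hc _ (by omega)

lemma cylProbQ_rev_pos (p : ℕ → ℝ) (E : ℝ)
    (hp : ∀ n, 0 ≤ p n) (hp1 : HasSum p 1)
    (hsupp : ∀ N : ℕ, ∃ n, N ≤ n ∧ 0 < p n)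
    (hE : E = ∑' n : ℕ, (n : ℝ) * p n)
    (w : ℕ → ℕ) (N : ℕ) (hN : 1 ≤ N)
    (hadm : ∀ j, j + 1 < N → 0 < Ptrans p (w j) (w (j + 1))) :
    0 < cylProbQ p E (fun k => if k < N then w (N - 1 - k) else 0) N := by
  unfold cylProbQ
  apply mul_pos (mdist_pos hp hp1 hsupp hE _)
  apply Finset.prod_pos
  intro k hk
  rw [Finset.mem_range] at hk
  show 0 < qtrans p E (if k < N then w (N - 1 - k) else 0)
    (if k + 1 < N then w (N - 1 - (k + 1)) else 0)
  rw [if_pos (by omega), if_pos (by omega)]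
  apply qtrans_pos hp hp1 hsupp hE
  have h := hadm (N - 2 - k) (by omega)
  have e1 : N - 2 - k + 1 = N - 1 - k := by omega
  have e2 : N - 1 - (k + 1) = N - 2 - k := by omega
  rw [e1] at h
  rw [e2]
  exact h

end AuxWord


/-- splitting inequality: if f, g are injective and the splitting
condition holds, then there is a ℙ⁻-admissible cylinder W = [ξ₀,…,ξ_{N-1}] with
ℙ⁻(S_{nN}ˣ) ≤ ℙ⁻(Σ_n^W) for all n ≥ 1 and all x ∈ I. -/
theorem stmt12 (a b : ℝ) (hab : a < b)
    (f g : Set.Icc a b → Set.Icc a b) (hfc : Continuous f) (hgc : Continuous g)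
    (hfi : Function.Injective f) (hgi : Function.Injective g)
    (p : ℕ → ℝ) (E : ℝ)
    (hp : ∀ n, 0 ≤ p n) (hp1 : HasSum p 1) (hp0 : 0 < p 0)
    (hmean : Summable fun n : ℕ => (n : ℝ) * p n)
    (hE : E = ∑' n : ℕ, (n : ℝ) * p n)
    (hsupp : ∀ N : ℕ, ∃ n, N ≤ n ∧ 0 < p n)
    (Pm : Measure (ℕ → ℕ)) [IsProbabilityMeasure Pm]
    (hPm : ∀ n, 1 ≤ n → ∀ ξ : ℕ → ℕ, Pm (cyl ξ n) = ENNReal.ofReal (cylProbQ p E ξ n))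
    (Pp : Measure (ℕ → ℕ)) [IsProbabilityMeasure Pp]
    (hPp : ∀ n, 1 ≤ n → ∀ ξ : ℕ → ℕ, Pp (cyl ξ n) = ENNReal.ofReal (cylProbP p E ξ n))
    (hsplit : Splitting a b (fseq a b g f) Pp) :
    ∃ (N : ℕ) (ξ : ℕ → ℕ), 1 ≤ N ∧ 0 < Pm (cyl ξ N) ∧
      ∀ n, 1 ≤ n → ∀ x : Set.Icc a b,
        Pm (SnX a b (fseq a b g f) x (n * N)) ≤ Pm (SigW ξ N n) := by
  obtain ⟨l, r, c, d, hl, hr, hcP, hdP, hlast, hdisjcd⟩ := hsplit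
  set fI := fseq a b g f with hfI
  have hinj : ∀ k, Function.Injective (fI k) := by
    intro k
    show Function.Injective (if k = 0 then g else f)
    split
    · exact hgi
    · exact hfi
  have hq0 := qtrans_nonneg hp hp1 hsupp hE
  have hm0 : ∀ i, 0 ≤ mdist p E i := fun i => (mdist_pos hp hp1 hsupp hE i).le
  -- positivity of the transition factors of c and d
  have hfac : ∀ (c' : ℕ → ℕ) (l' : ℕ), 1 ≤ l' → 0 < Pp (cyl c' l') →
      ∀ i, i + 1 < l' → 0 < Ptrans p (c' i) (c' (i + 1)) := by
    intro c' l' hl' hPos i hi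
    rw [hPp l' hl' c'] at hPos
    have hpos : 0 < cylProbP p E c' l' := ENNReal.ofReal_pos.mp hPos
    by_contra hle
    push_neg at hle
    have h00 : Ptrans p (c' i) (c' (i + 1)) = 0 :=
      le_antisymm hle (Ptrans_nonneg hp _ _)
    have : cylProbP p E c' l' = 0 := by
      unfold cylProbP
      rw [Finset.prod_eq_zero (Finset.mem_range.mpr (show i < l' - 1 by omega)) h00,
        mul_zero]
    linarith
  have hcfac := hfac c l hl hcP
  have hdfac := hfac d r hr hdP
  -- choose the climbing height t
  obtain ⟨t, htmax, htp⟩ := hsupp (max (c 0) (d 0))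
  have htc : c 0 ≤ t := le_trans (le_max_left _ _) htmax
  have htd : d 0 ≤ t := le_trans (le_max_right _ _) htmax
  set A1 := t - c 0 with hA1
  set A2 := t - d 0 with hA2
  set N := max (A1 + l + 1) (A2 + r + 1) with hNdef
  set z1 := N - (A1 + l) with hz1def
  set z2 := N - (A2 + r) with hz2def
  have hz1 : 1 ≤ z1 ∧ z1 + A1 + l = N := by omega
  have hz2 : 1 ≤ z2 ∧ z2 + A2 + r = N := by omega
  have hN : 1 ≤ N := by omega
  set u := mkWord c t z1 A1 with hu
  set v := mkWord d t z2 A2 with hv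
  have hu_adm : ∀ j, j + 1 < N → 0 < Ptrans p (u j) (u (j + 1)) := by
    intro j hj
    exact mkWord_adm p hp0 c l t z1 A1 hl hz1.1 htc htp hA1 hcfac j (by omega)
  have hv_adm : ∀ j, j + 1 < N → 0 < Ptrans p (v j) (v (j + 1)) := by
    intro j hj
    exact mkWord_adm p hp0 d r t z2 A2 hr hz2.1 htd htp hA2 hdfac j (by omega)
  -- the two reversed words
  set ξf : ℕ → ℕ := fun k => if k < N then u (N - 1 - k) else 0 with hξf
  set ηf : ℕ → ℕ := fun k => if k < N then v (N - 1 - k) else 0 with hηf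
  have hu_last : u (N - 1) = c (l - 1) := by
    rw [hu, mkWord_eval_hi (by omega)]
    congr 1
    omega
  have hv_last : v (N - 1) = d (r - 1) := by
    rw [hv, mkWord_eval_hi (by omega)]
    congr 1
    omega
  have hu0 : u 0 = 0 := by rw [hu, mkWord_eval_lt (by omega)]
  have hv0 : v 0 = 0 := by rw [hv, mkWord_eval_lt (by omega)]
  have h0 : ξf 0 = ηf 0 := by
    show (if 0 < N then u (N - 1 - 0) else 0) = (if 0 < N then v (N - 1 - 0) else 0)
    rw [if_pos (by omega), if_pos (by omega)]
    simp only [Nat.sub_zero]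
    rw [hu_last, hv_last, hlast]
  have hN1 : ξf (N - 1) = ηf (N - 1) := by
    show (if N - 1 < N then u (N - 1 - (N - 1)) else 0)
      = (if N - 1 < N then v (N - 1 - (N - 1)) else 0)
    rw [if_pos (by omega), if_pos (by omega)]
    have e : N - 1 - (N - 1) = 0 := by omega
    rw [e, hu0, hv0]
  -- positivity of the cylinder probabilities
  have hQξpos : 0 < cylProbQ p E ξf N :=
    cylProbQ_rev_pos p E hp hp1 hsupp hE u N hN hu_adm
  have hQηpos : 0 < cylProbQ p E ηf N :=
    cylProbQ_rev_pos p E hp hp1 hsupp hE v N hN hv_adm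
  -- disjointness of the images
  have himg : ∀ (c' : ℕ → ℕ) (l' z A : ℕ), z + A + l' = N →
      itfRev a b fI (mkWord c' t z A) N '' Set.univ ⊆ itfRev a b fI c' l' '' Set.univ := by
    intro c' l' z A hzN y hy
    obtain ⟨x0, -, hx0⟩ := hy
    refine ⟨itfRev a b fI (mkWord c' t z A) (z + A) x0, Set.mem_univ _, ?_⟩
    have e1 : itfRev a b fI (mkWord c' t z A) ((z + A) + l') x0
        = itfRev a b fI (fun k => mkWord c' t z A ((z + A) + k)) l'
          (itfRev a b fI (mkWord c' t z A) (z + A) x0) :=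
      congrFun (itfRev_add (mkWord c' t z A) (z + A) l') x0
    have e2 : itfRev a b fI (fun k => mkWord c' t z A ((z + A) + k)) l'
        = itfRev a b fI c' l' := by
      apply itfRev_congr
      intro i hi
      rw [mkWord_eval_hi (by omega)]
      congr 1
      omega
    rw [← hx0]
    have e3 : N = (z + A) + l' := by omega
    rw [e3, e1, e2]
  have hrevξ : itf a b fI ξf N = itfRev a b fI u N := by
    apply itf_eq_itfRev
    intro j hj
    show u j = (if N - 1 - j < N then u (N - 1 - (N - 1 - j)) else 0)
    rw [if_pos (by omega)]
    congr 1
    omega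
  have hrevη : itf a b fI ηf N = itfRev a b fI v N := by
    apply itf_eq_itfRev
    intro j hj
    show v j = (if N - 1 - j < N then v (N - 1 - (N - 1 - j)) else 0)
    rw [if_pos (by omega)]
    congr 1
    omega
  have hdisjfinal : itf a b fI ξf N '' Set.univ ∩ itf a b fI ηf N '' Set.univ = ∅ := by
    rw [hrevξ, hrevη]
    rw [← Set.subset_empty_iff]
    intro y hy
    rw [← hdisjcd]
    exact ⟨himg c l z1 A1 hz1.2 hy.1, himg d r z2 A2 hz2.2 hy.2⟩
  have hPmpos : ∀ ζ : ℕ → ℕ, 0 < cylProbQ p E ζ N → 0 < Pm (cyl ζ N) := by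
    intro ζ h
    rw [hPm N hN ζ]
    exact ENNReal.ofReal_pos.mpr h
  rcases le_total (∏ k ∈ Finset.range (N - 1), qtrans p E (ξf k) (ξf (k + 1)))
      (∏ k ∈ Finset.range (N - 1), qtrans p E (ηf k) (ηf (k + 1))) with hle | hle
  · exact ⟨N, ξf, hN, hPmpos ξf hQξpos, fun n hn x =>
      main_aux fI hinj p E hq0 hm0 Pm hPm N hN ξf ηf h0 hN1 hle hdisjfinal n hn x⟩
  · refine ⟨N, ηf, hN, hPmpos ηf hQηpos, fun n hn x => ?_⟩
    exact main_aux fI hinj p E hq0 hm0 Pm hPm N hN ηf ξf h0.symm hN1.symm hle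
      (by rw [Set.inter_comm]; exact hdisjfinal) n hn x

end
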